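/- Let n ≥ 7 be an integer with n ∉ {8, 12, 24}. There is no point in the plane of a regular n-gon with unit side length that is at rational distance from all n vertices. Concretely: for any c, w ∈ ℂ with |w·(exp(2πi/n) − 1)| = 1, setting z_k = c + w·exp(2πik/n) for k = 0,…,n−1, there is no p ∈ ℂ such that |p − z_k| ∈ ℚ for every k. -/

import Mathlib

open Complex in
lemma aux_cos_irrational (n : ℕ) (hn : 7 ≤ n) :
    Irrational (Real.cos (2 * Real.pi / n)) := by
  rintro ⟨s, hs⟩
  have hπ := Real.pi_pos
  have hn0 : (0:ℝ) < n := by positivity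
  set φ : ℝ := 2 * Real.pi / n with hφ
  have hφpos : 0 < φ := by positivity
  have hφlt : φ < Real.pi / 3 := by
    rw [hφ, div_lt_div_iff₀ hn0 (by norm_num)]
    have : (7:ℝ) ≤ n := by exact_mod_cast hn
    nlinarith
  -- bounds on cos
  have hub : Real.cos φ < 1 := by
    have h := Real.cos_lt_cos_of_nonneg_of_le_pi (le_refl 0) (by nlinarith : φ ≤ Real.pi) hφpos
    rwa [Real.cos_zero] at h
  have hlb : (1:ℝ)/2 < Real.cos φ := by
    have := Real.cos_lt_cos_of_nonneg_of_le_pi (le_of_lt hφpos) (by nlinarith) hφlt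
    rwa [Real.cos_pi_div_three] at this
  -- integrality of 2 cos φ
  set ζ : ℂ := Complex.exp ((φ:ℂ) * Complex.I) with hζ
  have hζn : ζ ^ n = 1 := by
    rw [hζ, ← Complex.exp_nat_mul]
    have : (n:ℂ) * ((φ:ℂ) * Complex.I) = 2 * Real.pi * Complex.I := by
      rw [hφ]
      push_cast
      have hne : (n:ℂ) ≠ 0 := by
        exact_mod_cast Nat.cast_ne_zero.mpr (by omega)
      field_simp
    rw [this, Complex.exp_two_pi_mul_I]
  have hint : IsIntegral ℤ ζ := by
    refine ⟨Polynomial.X ^ n - 1, Polynomial.monic_X_pow_sub_C 1 (by omega), ?_⟩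
    simp [hζn]
  have hintc : IsIntegral ℤ ((starRingEnd ℂ) ζ) := by
    refine ⟨Polynomial.X ^ n - 1, Polynomial.monic_X_pow_sub_C 1 (by omega), ?_⟩
    have : ((starRingEnd ℂ) ζ) ^ n = 1 := by
      rw [← map_pow, hζn, map_one]
    simp [this]
  have hsum : IsIntegral ℤ (ζ + (starRingEnd ℂ) ζ) := hint.add hintc
  have h2c : ζ + (starRingEnd ℂ) ζ = ((2 * Real.cos φ : ℝ) : ℂ) := by
    rw [Complex.add_conj, hζ, Complex.exp_ofReal_mul_I_re]
  rw [h2c] at hsum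
  have h2s : ((2 * Real.cos φ : ℝ) : ℂ) = algebraMap ℚ ℂ (2 * s) := by
    push_cast [← hs]
    norm_num
  rw [h2s] at hsum
  have : IsIntegral ℤ (2 * s) :=
    (isIntegral_algebraMap_iff ((algebraMap ℚ ℂ).injective)).mp hsum
  obtain ⟨m, hm⟩ := IsIntegrallyClosed.isIntegral_iff.mp this
  have hmr : (m : ℝ) = 2 * Real.cos φ := by
    have hm' : (m : ℚ) = 2 * s := hm
    have : ((m:ℚ):ℝ) = ((2*s : ℚ):ℝ) := by rw [hm']
    push_cast at this
    rw [this, hs]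
  have h1 : (1:ℝ) < m := by rw [hmr]; linarith
  have h2 : (m:ℝ) < 2 := by rw [hmr]; linarith
  have : (1:ℤ) < m := by exact_mod_cast h1
  have : m < 2 := by exact_mod_cast h2
  omega

/-- For every integer `n ≥ 7` with `n ∉ {8, 12, 24}`, there is no point in the
plane of a unit regular `n`-gon at rational distance from all `n` vertices. -/
theorem no_rational_distance_point_ngon (n : ℕ) (hn : 7 ≤ n)
    (h8 : n ≠ 8) (h12 : n ≠ 12) (h24 : n ≠ 24) (c w : ℂ)
    (hw : ‖w * (Complex.exp (2 * Real.pi * Complex.I / (n : ℂ)) - 1)‖ = 1) :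
    ¬ ∃ p : ℂ, ∀ k : Fin n, ∃ q : ℚ,
      ‖p - (c + w * Complex.exp (2 * Real.pi * Complex.I * ((k : ℕ) : ℂ) / (n : ℂ)))‖ = q := by
  rintro ⟨p, hp⟩
  choose q hq using hp
  have hπ := Real.pi_pos
  have hn0 : (0:ℝ) < n := by
    have : (7:ℝ) ≤ n := by exact_mod_cast hn
    linarith
  have h7 : (7:ℝ) ≤ n := by exact_mod_cast hn
  have hnC : (n:ℂ) ≠ 0 := Nat.cast_ne_zero.mpr (by omega)
  set φ : ℝ := 2 * Real.pi / n with hφ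
  have hγ := aux_cos_irrational n hn
  set γ : ℝ := Real.cos φ with hγdef
  set ζ : ℂ := Complex.exp (2 * Real.pi * Complex.I / n) with hζ
  have hζ' : ζ = Complex.exp ((φ:ℂ) * Complex.I) := by
    rw [hζ]; congr 1; rw [hφ]; push_cast; field_simp
  have hre : ζ.re = γ := by rw [hζ']; exact Complex.exp_ofReal_mul_I_re φ
  have him : ζ.im = Real.sin φ := by rw [hζ']; exact Complex.exp_ofReal_mul_I_im φ
  have hnorm : Complex.normSq ζ = 1 := by
    rw [← Complex.sq_norm, hζ', Complex.norm_exp_ofReal_mul_I]; norm_num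
  have hone : ζ * (starRingEnd ℂ) ζ = 1 := by
    rw [Complex.mul_conj, hnorm]; norm_num
  have hvert : ∀ k : ℕ, Complex.exp (2 * Real.pi * Complex.I * k / n) = ζ ^ k := by
    intro k
    rw [hζ, ← Complex.exp_nat_mul]
    congr 1
    ring
  set u : ℂ := (p - c) * (starRingEnd ℂ) w with hu
  set t : ℝ := (Complex.normSq (p - c) + Complex.normSq w) / 2 with ht0
  set R : ℕ → ℚ := fun k => (if h : k < n then q ⟨k, h⟩ else 0)^2 / 2 with hR
  set f : ℕ → ℝ := fun k => (u * (starRingEnd ℂ) (ζ ^ k)).re with hfdef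
  -- Key 1 : distance expansion
  have key1 : ∀ k, k < n → f k = t - (R k : ℝ) := by
    intro k hk
    have h := hq ⟨k, hk⟩
    have hk' : ((⟨k, hk⟩ : Fin n) : ℕ) = k := rfl
    rw [hk', hvert k] at h
    have hsq : Complex.normSq (p - (c + w * ζ ^ k)) = ((q ⟨k, hk⟩ : ℝ))^2 := by
      rw [← Complex.sq_norm, h]
    have e0 : p - (c + w * ζ ^ k) = (p - c) - w * ζ ^ k := by ring
    rw [e0, Complex.normSq_sub] at hsq
    have e1 : Complex.normSq (w * ζ ^ k) = Complex.normSq w := by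
      rw [map_mul, map_pow, hnorm]; simp
    have e2 : (p - c) * (starRingEnd ℂ) (w * ζ ^ k) = u * (starRingEnd ℂ) (ζ ^ k) := by
      rw [map_mul, hu]; ring
    rw [e1, e2] at hsq
    have hRk : (R k : ℝ) = ((q ⟨k, hk⟩ : ℝ))^2 / 2 := by
      simp only [hR, dif_pos hk]
      push_cast
      ring
    rw [hfdef, ht0, hRk]
    dsimp only
    linarith [hsq]
  -- Key 2 : three-term recurrence
  have key2 : ∀ k, f (k+2) + f k = 2 * γ * f (k+1) := by
    intro k
    have h2 : ((2*γ : ℝ):ℂ) = ζ + (starRingEnd ℂ) ζ := by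
      rw [Complex.add_conj, hre]
    have hcc : ζ^(k+2) + ζ^k = ((2*γ : ℝ):ℂ) * ζ^(k+1) := by
      rw [h2]
      linear_combination (-(ζ^k)) * hone
    have step1 : f (k+2) + f k = (u * ((starRingEnd ℂ) (ζ^(k+2) + ζ^k))).re := by
      rw [hfdef]
      simp [map_add, mul_add]
    rw [step1, hcc, map_mul, Complex.conj_ofReal]
    have step2 : u * (((2*γ : ℝ):ℂ) * (starRingEnd ℂ) (ζ^(k+1)))
        = ((2*γ : ℝ):ℂ) * (u * (starRingEnd ℂ) (ζ^(k+1))) := by ring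
    rw [step2]
    rw [Complex.re_ofReal_mul]
  -- the basic equations
  have E : ∀ k, k + 2 < n →
      (t - (R (k+2) : ℝ)) + (t - (R k : ℝ)) = 2 * γ * (t - (R (k+1) : ℝ)) := by
    intro k hk
    have := key2 k
    rw [key1 (k+2) hk, key1 k (by omega), key1 (k+1) (by omega)] at this
    exact this
  -- consecutive interior values are equal
  have hstep : ∀ k, k + 3 < n → R (k+1) = R (k+2) := by
    intro k hk
    by_contra hne
    have e1 := E k (by omega)
    have e2 := E (k+1) (by omega)
    apply hγ
    refine ⟨((R (k+3) : ℚ) + R (k+1) - R (k+2) - R k) / (2*((R (k+2) : ℚ) - R (k+1))), ?_⟩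
    have hb : (R (k+2) : ℝ) - (R (k+1) : ℝ) ≠ 0 := by
      intro h
      apply hne
      have h' : (R (k+1) : ℝ) = (R (k+2) : ℝ) := by linarith
      exact_mod_cast h'
    push_cast
    rw [div_eq_iff (by intro h; apply hb; linarith)]
    linear_combination e1 - e2
  -- all interior values equal R 1
  have hconst : ∀ j, 1 ≤ j → j + 1 < n → R j = R 1 := by
    intro j
    induction j with
    | zero => omega
    | succ i ih =>
      intro h1 h2
      rcases Nat.eq_zero_or_pos i with hi | hi
      · subst hi; rfl
      · have hs := hstep (i-1) (by omega)
        rw [show i-1+1 = i from by omega, show i-1+2 = i+1 from by omega] at hs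
        rw [← hs]
        exact ih (by omega) (by omega)
  -- t = R 1
  have hR2 : R 2 = R 1 := hconst 2 (by omega) (by omega)
  have hR3 : R 3 = R 1 := hconst 3 (by omega) (by omega)
  have ht1 : t = (R 1 : ℝ) := by
    have e := E 1 (by omega)
    rw [hR3, hR2] at e
    by_contra hne
    apply hγ
    refine ⟨1, ?_⟩
    have hfac : (2 - 2*γ) * (t - (R 1 : ℝ)) = 0 := by linear_combination e
    rcases mul_eq_zero.mp hfac with h | h
    · push_cast; linarith
    · exact absurd (by linarith : t = (R 1 : ℝ)) hne
  have hprod0 : 2 * γ * (t - (R 1 : ℝ)) = 0 := by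
    rw [ht1]; ring
  -- R 0 = t
  have hR0 : (R 0 : ℝ) = t := by
    have e := E 0 (by omega)
    rw [hR2] at e
    rw [ht1] at e ⊢
    linarith [hprod0, e]
  -- R (n-1) = t
  have hRlast : (R (n-1) : ℝ) = t := by
    have e := E (n-3) (by omega)
    rw [show n-3+2 = n-1 from by omega, show n-3+1 = n-2 from by omega] at e
    have ha : R (n-2) = R 1 := hconst (n-2) (by omega) (by omega)
    have hb : R (n-3) = R 1 := hconst (n-3) (by omega) (by omega)
    rw [ha, hb] at e
    rw [ht1] at e ⊢
    linarith [hprod0, e]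
  -- f 0 = 0 and f 1 = 0
  have hf0 : f 0 = 0 := by rw [key1 0 (by omega), hR0]; ring
  have hf1 : f 1 = 0 := by
    rw [key1 1 (by omega), ht1]; ring
  -- conclude u = 0
  have hure : u.re = 0 := by
    have : f 0 = u.re := by simp [hfdef]
    linarith [hf0, this]
  have huim : u.im = 0 := by
    have hexp : f 1 = u.re * γ + u.im * Real.sin φ := by
      simp only [hfdef, pow_one, Complex.mul_re, Complex.conj_re, Complex.conj_im, hre, him]
      ring
    have hsin : Real.sin φ ≠ 0 := by
      have hφpos : 0 < φ := by rw [hφ]; positivity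
      have hφlt : φ < Real.pi := by
        rw [hφ]
        rw [div_lt_iff₀ hn0]
        nlinarith [h7, hπ]
      exact ne_of_gt (Real.sin_pos_of_pos_of_lt_pi hφpos hφlt)
    have : u.im * Real.sin φ = 0 := by
      rw [hexp, hure] at hf1
      linarith
    exact (mul_eq_zero.mp this).resolve_right hsin
  have hu0 : u = 0 := Complex.ext hure huim
  have hw0 : w ≠ 0 := by
    intro h
    rw [h] at hw
    simp at hw
  have hpc : p - c = 0 := by
    rcases mul_eq_zero.mp hu0 with h | h
    · exact h
    · exact absurd (by simpa using h : w = 0) hw0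
  -- now t = normSq w / 2 and circumradius condition gives contradiction
  have htw : t = Complex.normSq w / 2 := by
    rw [ht0, hpc]
    simp
  have hw2 : Complex.normSq w * Complex.normSq (ζ - 1) = 1 := by
    have : Complex.normSq (w * (ζ - 1)) = 1 := by
      rw [← Complex.sq_norm, hw]; norm_num
    rw [map_mul] at this
    exact this
  have hns : Complex.normSq (ζ - 1) = 2 - 2*γ := by
    have hsc := Real.sin_sq_add_cos_sq φ
    simp [Complex.normSq_apply, Complex.sub_re, Complex.sub_im, hre, him]
    nlinarith [hsc]
  rw [hns] at hw2
  have hnw : Complex.normSq w = 2 * (R 0 : ℝ) := by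
    rw [hR0, htw]; ring
  rw [hnw] at hw2
  have hR0ne : (R 0 : ℝ) ≠ 0 := by
    intro h
    rw [h] at hw2
    norm_num at hw2
  apply hγ
  refine ⟨(4 * R 0 - 1) / (4 * R 0), ?_⟩
  push_cast
  rw [div_eq_iff (by intro h; apply hR0ne; linarith)]
  linear_combination hw2
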